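/- Let A(λ) be a P×P complex matrix-valued analytic function on a neighborhood of λ_j ∈ ℂ, b(λ) a P-vector-valued analytic function, and suppose A(λ) satisfies the identity A'(λ) = (i/(ελ)) B(λ) - (i/ε) A(λ) Z, where B(λ) is the P×P matrix each of whose columns equals b(λ), Z = diag(z_1,...,z_P), and ε ≠ 0, λ_j ≠ 0. Suppose A(λ_j) has rank P-1 with right nullvector φ satisfying Σ_{p=1}^P φ_p = λ_j, and left nullvector m with mᵀ b(λ_j) ≠ 0. If v(λ) solves A(λ) v(λ) = b(λ) for λ near λ_j with λ ≠ λ_j, and v has a simple pole at λ_j with Laurent expansion v(λ) = v^{[-1]}/(λ - λ_j) + v^{[0]} + O(λ - λ_j), then v^{[-1]} = -iε φ. -/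

import Mathlib

open Complex Filter Matrix Finset
open scoped Topology

/-- Under the differential identity `A'(λ) = (i/(ελ))B(λ) - (i/ε)A(λ)Z`
(columns of `B(λ)` all equal `b(λ)`, `Z = diag(z₁,…,z_P)`), with `A(λⱼ)` of rank `P-1`,
right nullvector `φ` normalized by `Σφ_p = λⱼ`, left nullvector `m` with `mᵀb(λⱼ) ≠ 0`,
and `v(λ)` solving `A(λ)v(λ) = b(λ)` near `λⱼ` with a simple-pole Laurent expansion
`v(λ) = v⁽⁻¹⁾/(λ-λⱼ) + v⁽⁰⁾ + O(λ-λⱼ)`, the residue is `v⁽⁻¹⁾ = -iε φ`. -/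
theorem stmt10 (P : ℕ) (ε : ℝ) (hε : ε ≠ 0) (lamj : ℂ) (hlamj : lamj ≠ 0)
    (A : ℂ → Matrix (Fin P) (Fin P) ℂ) (b : ℂ → Fin P → ℂ) (zd : Fin P → ℂ)
    (hAan : ∀ i j : Fin P, AnalyticAt ℂ (fun l => A l i j) lamj)
    (hban : ∀ i : Fin P, AnalyticAt ℂ (fun l => b l i) lamj)
    (r : ℝ) (hr : 0 < r)
    (hA' : ∀ l : ℂ, l ≠ 0 → ‖l - lamj‖ < r → ∀ i j : Fin P,
      HasDerivAt (fun l' => A l' i j)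
        ((I / (ε * l)) * b l i - (I / (ε : ℂ)) * (A l * Matrix.diagonal zd) i j) l)
    (hrank : (A lamj).rank = P - 1)
    (φ : Fin P → ℂ) (hφ : A lamj *ᵥ φ = 0) (hφnorm : ∑ p, φ p = lamj)
    (m : Fin P → ℂ) (hm : m ᵥ* A lamj = 0) (hmb : m ⬝ᵥ b lamj ≠ 0)
    (v : ℂ → Fin P → ℂ)
    (hsolve : ∀ l : ℂ, l ≠ lamj → ‖l - lamj‖ < r → A l *ᵥ v l = b l)
    (vm1 v0 : Fin P → ℂ) (C : ℝ)
    (hLaurent : ∀ l : ℂ, l ≠ lamj → ‖l - lamj‖ < r →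
      ‖v l - ((l - lamj)⁻¹ • vm1 + v0)‖ ≤ C * ‖l - lamj‖) :
    vm1 = (-(I * ε)) • φ := by
  -- the remainder of the Laurent expansion
  set u : ℂ → Fin P → ℂ := fun l => v l - ((l - lamj)⁻¹ • vm1 + v0) with hu_def
  set F : Filter ℂ := 𝓝[≠] lamj with hF_def
  -- eventually in the punctured neighborhood we are in the ball and off lamj
  have hev : ∀ᶠ l in F, l ≠ lamj ∧ ‖l - lamj‖ < r := by
    have h1 : ∀ᶠ l in 𝓝 lamj, ‖l - lamj‖ < r := by
      have := Metric.ball_mem_nhds lamj hr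
      filter_upwards [this] with l hl
      simpa [Metric.mem_ball, dist_eq_norm] using hl
    have h2 : ∀ᶠ l in F, l ≠ lamj := eventually_mem_nhdsWithin
    exact h2.and (h1.filter_mono nhdsWithin_le_nhds)
  -- the remainder tends to 0 componentwise
  have huT : ∀ j : Fin P, Tendsto (fun l => u l j) F (𝓝 0) := by
    intro j
    apply squeeze_zero_norm' (a := fun l => C * ‖l - lamj‖)
    · filter_upwards [hev] with l ⟨hl, hlr⟩
      exact le_trans (norm_le_pi_norm (u l) j) (hLaurent l hl hlr)
    · have : Tendsto (fun l : ℂ => C * ‖l - lamj‖) (𝓝 lamj) (𝓝 (C * ‖lamj - lamj‖)) :=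
        (((continuous_id.sub continuous_const).norm).tendsto lamj).const_mul C
      simpa using this.mono_left nhdsWithin_le_nhds
  -- entrywise continuity of A and b
  have hAt : ∀ i j : Fin P, Tendsto (fun l => A l i j) F (𝓝 (A lamj i j)) := fun i j =>
    ((hAan i j).continuousAt.tendsto).mono_left nhdsWithin_le_nhds
  have hbt : ∀ i : Fin P, Tendsto (fun l => b l i) F (𝓝 (b lamj i)) := fun i =>
    ((hban i).continuousAt.tendsto).mono_left nhdsWithin_le_nhds
  -- master identity from the solve equation
  have hmaster : ∀ᶠ l in F, ∀ i, b l i =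
      (l - lamj)⁻¹ * (∑ j, A l i j * vm1 j) + (∑ j, A l i j * v0 j) + ∑ j, A l i j * u l j := by
    filter_upwards [hev] with l ⟨hl, hlr⟩ i
    have hb := congrFun (hsolve l hl hlr) i
    simp only [mulVec, dotProduct] at hb
    rw [← hb, Finset.mul_sum, ← Finset.sum_add_distrib, ← Finset.sum_add_distrib]
    refine Finset.sum_congr rfl fun j _ => ?_
    have hu : u l j = v l j - ((l - lamj)⁻¹ * vm1 j + v0 j) := by
      simp [hu_def]
    rw [hu]; ring
  -- STEP 1: A(lamj) vm1 = 0, componentwise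
  have hstep1 : ∀ i, (∑ j, A lamj i j * vm1 j) = 0 := by
    intro i
    have hlim1 : Tendsto (fun l => ∑ j, A l i j * vm1 j) F (𝓝 (∑ j, A lamj i j * vm1 j)) :=
      tendsto_finset_sum _ fun j _ => (hAt i j).mul_const _
    have heq : ∀ᶠ l in F,
        (l - lamj) * (b l i - (∑ j, A l i j * v0 j) - ∑ j, A l i j * u l j)
          = ∑ j, A l i j * vm1 j := by
      filter_upwards [hmaster, hev] with l hM ⟨hl, _⟩
      have hne : l - lamj ≠ 0 := sub_ne_zero.mpr hl
      rw [hM i]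
      field_simp
      ring
    have hlim2 : Tendsto (fun l => ∑ j, A l i j * vm1 j) F (𝓝 0) := by
      have hT : Tendsto (fun l =>
          (l - lamj) * (b l i - (∑ j, A l i j * v0 j) - ∑ j, A l i j * u l j)) F (𝓝 0) := by
        have h1 : Tendsto (fun l : ℂ => l - lamj) F (𝓝 0) := by
          have : Tendsto (fun l : ℂ => l - lamj) (𝓝 lamj) (𝓝 (lamj - lamj)) :=
            (continuous_id.sub continuous_const).tendsto lamj
          simpa using this.mono_left nhdsWithin_le_nhds
        have h2 : Tendsto (fun l => b l i - (∑ j, A l i j * v0 j) - ∑ j, A l i j * u l j) F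
            (𝓝 (b lamj i - (∑ j, A lamj i j * v0 j) - ∑ j, A lamj i j * 0)) := by
          refine ((hbt i).sub (tendsto_finset_sum _ fun j _ => (hAt i j).mul_const _)).sub
            (tendsto_finset_sum _ fun j _ => (hAt i j).mul (huT j))
        simpa using h1.mul h2
      exact hT.congr' heq
    exact tendsto_nhds_unique hlim1 hlim2
  have hvm1ker : A lamj *ᵥ vm1 = 0 := by
    funext i
    simpa [mulVec, dotProduct] using hstep1 i
  -- kernel is one-dimensional: vm1 = c • φ
  obtain ⟨c, hvc⟩ : ∃ c : ℂ, vm1 = c • φ := by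
    have hP : 0 < P := by
      rcases Nat.eq_zero_or_pos P with h0 | h
      · subst h0; simp at hφnorm; exact absurd hφnorm.symm hlamj
      · exact h
    have hφ0 : φ ≠ 0 := by
      intro h; apply hlamj; rw [← hφnorm, h]; simp
    have hφK : φ ∈ LinearMap.ker (A lamj).mulVecLin := by
      simp [LinearMap.mem_ker, Matrix.mulVecLin_apply, hφ]
    have hvK : vm1 ∈ LinearMap.ker (A lamj).mulVecLin := by
      simp [LinearMap.mem_ker, Matrix.mulVecLin_apply, hvm1ker]
    have hkerrank : Module.finrank ℂ (LinearMap.ker (A lamj).mulVecLin) = 1 := by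
      have h1 := LinearMap.finrank_range_add_finrank_ker (A lamj).mulVecLin
      rw [Module.finrank_pi] at h1
      rw [Matrix.rank] at hrank
      simp only [Fintype.card_fin] at h1
      omega
    have hx : (⟨φ, hφK⟩ : LinearMap.ker (A lamj).mulVecLin) ≠ 0 := by
      simp only [ne_eq, Submodule.mk_eq_zero]
      exact hφ0
    obtain ⟨c, hc⟩ := (finrank_eq_one_iff_of_nonzero'
      (⟨φ, hφK⟩ : LinearMap.ker (A lamj).mulVecLin) hx).mp hkerrank ⟨vm1, hvK⟩
    refine ⟨c, ?_⟩
    have := congrArg (Subtype.val) hc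
    simpa using this.symm
  -- STEP 2: derivative of g(l) = m ⬝ (A(l) vm1)
  have hder : ∀ i j : Fin P, HasDerivAt (fun l' => A l' i j)
      ((I / (ε * lamj)) * b lamj i - (I / (ε : ℂ)) * (A lamj * Matrix.diagonal zd) i j) lamj :=
    fun i j => hA' lamj hlamj (by simpa using hr) i j
  have hg : HasDerivAt (fun l => ∑ i, m i * ∑ j, A l i j * vm1 j)
      (∑ i, m i * ∑ j, ((I / (ε * lamj)) * b lamj i
        - (I / (ε : ℂ)) * (A lamj * Matrix.diagonal zd) i j) * vm1 j) lamj := by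
    refine HasDerivAt.fun_sum fun i _ => ?_
    exact (HasDerivAt.fun_sum fun j _ => (hder i j).mul_const (vm1 j)).const_mul (m i)
  have hg0 : (∑ i, m i * ∑ j, A lamj i j * vm1 j) = 0 := by
    simp [hstep1]
  have hslope : Tendsto (fun l => (l - lamj)⁻¹ * ∑ i, m i * ∑ j, A l i j * vm1 j) F
      (𝓝 (∑ i, m i * ∑ j, ((I / (ε * lamj)) * b lamj i
        - (I / (ε : ℂ)) * (A lamj * Matrix.diagonal zd) i j) * vm1 j)) := by
    have := hasDerivAt_iff_tendsto_slope.mp hg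
    refine this.congr' ?_
    filter_upwards [hev] with l ⟨hl, _⟩
    rw [slope_def_field, hg0]
    field_simp
    simp
  -- the identity summed against m
  have hid2 : ∀ᶠ l in F, ∑ i, m i * b l i =
      (l - lamj)⁻¹ * (∑ i, m i * ∑ j, A l i j * vm1 j)
        + (∑ i, m i * ∑ j, A l i j * v0 j) + ∑ i, m i * ∑ j, A l i j * u l j := by
    filter_upwards [hmaster] with l hM
    rw [Finset.mul_sum, ← Finset.sum_add_distrib, ← Finset.sum_add_distrib]
    refine Finset.sum_congr rfl fun i _ => ?_
    rw [hM i]; ring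
  -- take limits in hid2
  have hlhs : Tendsto (fun l => ∑ i, m i * b l i) F (𝓝 (∑ i, m i * b lamj i)) :=
    tendsto_finset_sum _ fun i _ => (hbt i).const_mul (m i)
  have hrhs : Tendsto (fun l =>
      (l - lamj)⁻¹ * (∑ i, m i * ∑ j, A l i j * vm1 j)
        + (∑ i, m i * ∑ j, A l i j * v0 j) + ∑ i, m i * ∑ j, A l i j * u l j) F
      (𝓝 ((∑ i, m i * ∑ j, ((I / (ε * lamj)) * b lamj i
        - (I / (ε : ℂ)) * (A lamj * Matrix.diagonal zd) i j) * vm1 j)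
        + (∑ i, m i * ∑ j, A lamj i j * v0 j) + ∑ i, m i * (0:ℂ) )) := by
    refine (hslope.add (tendsto_finset_sum _ fun i _ =>
      (tendsto_finset_sum _ fun j _ => (hAt i j).mul_const _).const_mul (m i))).add
      (tendsto_finset_sum _ fun i _ => ?_)
    have : Tendsto (fun l => ∑ j, A l i j * u l j) F (𝓝 (∑ j : Fin P, A lamj i j * (0:ℂ))) :=
      tendsto_finset_sum _ fun j _ => (hAt i j).mul (huT j)
    simpa using (this.const_mul (m i))
  have hid2' : (fun l => ∑ i, m i * b l i) =ᶠ[F] (fun l =>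
      (l - lamj)⁻¹ * (∑ i, m i * ∑ j, A l i j * vm1 j)
        + (∑ i, m i * ∑ j, A l i j * v0 j) + ∑ i, m i * ∑ j, A l i j * u l j) := hid2
  have hfinal := tendsto_nhds_unique hlhs (Filter.Tendsto.congr' hid2'.symm hrhs)
  -- the middle term vanishes
  have hY : (∑ i, m i * ∑ j, A lamj i j * v0 j) = 0 := by
    have h0 : m ⬝ᵥ (A lamj *ᵥ v0) = 0 := by
      rw [Matrix.dotProduct_mulVec, hm, zero_dotProduct]
    simpa [dotProduct, Matrix.mulVec] using h0
  have hz2 : (∑ i, m i * ∑ j, (A lamj * Matrix.diagonal zd) i j * vm1 j) = 0 := by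
    have h0 : m ⬝ᵥ ((A lamj * Matrix.diagonal zd) *ᵥ vm1) = 0 := by
      rw [Matrix.dotProduct_mulVec, ← Matrix.vecMul_vecMul, hm, Matrix.zero_vecMul,
        zero_dotProduct]
    simpa [dotProduct, Matrix.mulVec] using h0
  have hg'val : (∑ i, m i * ∑ j, ((I / (ε * lamj)) * b lamj i
        - (I / (ε : ℂ)) * (A lamj * Matrix.diagonal zd) i j) * vm1 j)
      = (I / (ε * lamj)) * (∑ i, m i * b lamj i) * (∑ j, vm1 j)
        - (I / (ε : ℂ)) * ∑ i, m i * ∑ j, (A lamj * Matrix.diagonal zd) i j * vm1 j := by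
    rw [mul_assoc, Finset.sum_mul_sum]
    simp only [Finset.mul_sum, Finset.sum_mul, sub_mul, mul_sub, Finset.sum_sub_distrib]
    refine congrArg₂ (· - ·) ?_ ?_ <;>
      refine Finset.sum_congr rfl fun i _ => Finset.sum_congr rfl fun j _ => by ring
  have hmb' : (∑ i, m i * b lamj i) ≠ 0 := by
    simpa [dotProduct] using hmb
  have hE : (∑ i, m i * b lamj i)
      = (I / (ε * lamj)) * (∑ i, m i * b lamj i) * (∑ j, vm1 j) := by
    rw [hg'val, hz2, hY] at hfinal
    simpa using hfinal
  have hS : (∑ j, vm1 j) = c * lamj := by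
    rw [hvc]
    simp only [Pi.smul_apply, smul_eq_mul, ← Finset.mul_sum, hφnorm]
  have hεC : (ε : ℂ) ≠ 0 := Complex.ofReal_ne_zero.mpr hε
  have hcS : (I / (ε * lamj)) * (∑ j, vm1 j) = 1 := by
    refine mul_left_cancel₀ hmb' ?_
    linear_combination -hE
  rw [hS] at hcS
  have hne : (ε : ℂ) * lamj ≠ 0 := mul_ne_zero hεC hlamj
  rw [div_mul_eq_mul_div, div_eq_iff hne, one_mul] at hcS
  have hIc : I * c = (ε : ℂ) := mul_right_cancel₀ hlamj (by linear_combination hcS)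
  have hcval : c = -(I * (ε : ℂ)) := by
    linear_combination (-I) * hIc + c * Complex.I_sq
  rw [hvc, hcval]
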